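/- arXiv:1906.04621 — 4 statements merged into one kernel-verified Lean document; each statement's English description precedes it below -/
import Mathlib

section
/- Let ⟨w_t⟩ be a sequence in (0,1) such that ∑ w_t converges. Then there exists a subsequence ⟨y_t⟩ of ⟨w_t⟩ which is strictly decreasing, has distinct finite products (i.e., for nonempty finite sets F ≠ G, ∏_{n∈F} y_n ≠ ∏_{n∈G} y_n), and satisfies FP(⟨y_t⟩) ⊆ FP(⟨w_t⟩). -/
open Finset

/-- Finite products of a sequence over nonempty finite index sets. -/
def FPinf (x : ℕ → ℝ) : Set ℝ :=
  {s | ∃ F : Finset ℕ, F.Nonempty ∧ s = ∏ n ∈ F, x n}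

/-- Recursive construction: index and running product. -/
noncomputable def prAux (w : ℕ → ℝ)
    (H : ∀ N : ℕ, ∀ ε : ℝ, ∃ n, N < n ∧ (0 < ε → w n < ε)) : ℕ → ℕ × ℝ
  | 0 => (0, w 0)
  | t + 1 =>
    let q := prAux w H t
    let n := (H q.1 (min (w q.1) q.2)).choose
    (n, q.2 * w n)

private lemma prod_le_of_mem {y : ℕ → ℝ} (hy : ∀ t, 0 < y t ∧ y t < 1)
    {F : Finset ℕ} {m : ℕ} (hm : m ∈ F) : ∏ n ∈ F, y n ≤ y m := by
  classical
  rw [← Finset.prod_erase_mul F y hm]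
  have h1 : ∏ n ∈ F.erase m, y n ≤ 1 :=
    Finset.prod_le_one (fun i _ => (hy i).1.le) (fun i _ => (hy i).2.le)
  nlinarith [(hy m).1, Finset.prod_pos (fun i (_ : i ∈ F.erase m) => (hy i).1)]

private lemma range_prod_le {y : ℕ → ℝ} (hy : ∀ t, 0 < y t ∧ y t < 1)
    {G : Finset ℕ} {m : ℕ} (hG : G ⊆ Finset.range m) :
    ∏ i ∈ Finset.range m, y i ≤ ∏ n ∈ G, y n := by
  classical
  rw [← Finset.prod_sdiff hG]
  have h1 : ∏ n ∈ Finset.range m \ G, y n ≤ 1 :=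
    Finset.prod_le_one (fun i _ => (hy i).1.le) (fun i _ => (hy i).2.le)
  nlinarith [Finset.prod_pos (fun i (_ : i ∈ G) => (hy i).1),
    Finset.prod_pos (fun i (_ : i ∈ Finset.range m \ G) => (hy i).1)]

private lemma low_lt {y : ℕ → ℝ} (hy : ∀ t, 0 < y t ∧ y t < 1)
    (hk : ∀ m, y m < ∏ i ∈ Finset.range m, y i)
    {F G : Finset ℕ} {m : ℕ} (hmF : m ∈ F) (hmG : m ∉ G)
    (hG : ∀ k ∈ G, k ≤ m) : ∏ n ∈ F, y n < ∏ n ∈ G, y n := by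
  have hGsub : G ⊆ Finset.range m := by
    intro k hk'
    rcases lt_or_eq_of_le (hG k hk') with h | h
    · exact Finset.mem_range.mpr h
    · exact absurd (h ▸ hk') hmG
  calc ∏ n ∈ F, y n ≤ y m := prod_le_of_mem hy hmF
    _ < ∏ i ∈ Finset.range m, y i := hk m
    _ ≤ ∏ n ∈ G, y n := range_prod_le hy hGsub

private lemma prods_ne {y : ℕ → ℝ} (hy : ∀ t, 0 < y t ∧ y t < 1)
    (hk : ∀ m, y m < ∏ i ∈ Finset.range m, y i)
    (F G : Finset ℕ) (hne : F ≠ G) : ∏ n ∈ F, y n ≠ ∏ n ∈ G, y n := by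
  classical
  -- the symmetric difference is nonempty
  have hD : ((F \ G) ∪ (G \ F)).Nonempty := by
    rw [Finset.nonempty_iff_ne_empty]
    intro h
    apply hne
    have h1 : F \ G = ∅ := by
      rw [Finset.union_eq_empty] at h; exact h.1
    have h2 : G \ F = ∅ := by
      rw [Finset.union_eq_empty] at h; exact h.2
    exact Finset.Subset.antisymm (Finset.sdiff_eq_empty_iff_subset.mp h1)
      (Finset.sdiff_eq_empty_iff_subset.mp h2)
  set D := (F \ G) ∪ (G \ F) with hDdef
  set m := D.max' hD with hm
  have hmD : m ∈ D := Finset.max'_mem D hD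
  have hsplitF : ∏ n ∈ F, y n =
      (∏ n ∈ F.filter (fun k => k ≤ m), y n) * ∏ n ∈ F.filter (fun k => ¬ k ≤ m), y n :=
    (Finset.prod_filter_mul_prod_filter_not F _ y).symm
  have hsplitG : ∏ n ∈ G, y n =
      (∏ n ∈ G.filter (fun k => k ≤ m), y n) * ∏ n ∈ G.filter (fun k => ¬ k ≤ m), y n :=
    (Finset.prod_filter_mul_prod_filter_not G _ y).symm
  have hhigh : F.filter (fun k => ¬ k ≤ m) = G.filter (fun k => ¬ k ≤ m) := by
    ext k
    simp only [Finset.mem_filter]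
    constructor
    · rintro ⟨hkF, hkm⟩
      refine ⟨?_, hkm⟩
      by_contra hkG
      have : k ∈ D := Finset.mem_union_left _ (Finset.mem_sdiff.mpr ⟨hkF, hkG⟩)
      exact hkm (Finset.le_max' D k this)
    · rintro ⟨hkG, hkm⟩
      refine ⟨?_, hkm⟩
      by_contra hkF
      have : k ∈ D := Finset.mem_union_right _ (Finset.mem_sdiff.mpr ⟨hkG, hkF⟩)
      exact hkm (Finset.le_max' D k this)
  have hhighpos : 0 < ∏ n ∈ F.filter (fun k => ¬ k ≤ m), y n :=
    Finset.prod_pos (fun i _ => (hy i).1)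
  -- m is in exactly one of F, G; handle both cases
  have key : ∀ {A B : Finset ℕ}, m ∈ A → m ∉ B →
      (∏ n ∈ A.filter (fun k => k ≤ m), y n) < ∏ n ∈ B.filter (fun k => k ≤ m), y n := by
    intro A B hmA hmB
    refine low_lt (F := A.filter (fun k => k ≤ m)) (G := B.filter (fun k => k ≤ m))
      hy hk (Finset.mem_filter.mpr ⟨hmA, le_refl m⟩) ?_ ?_
    · intro h; exact hmB (Finset.mem_filter.mp h).1
    · intro k hk'; exact (Finset.mem_filter.mp hk').2
  have hhighpos' : 0 < ∏ n ∈ G.filter (fun k => ¬ k ≤ m), y n := hhigh ▸ hhighpos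
  rcases Finset.mem_union.mp hmD with h | h
  · rcases Finset.mem_sdiff.mp h with ⟨hmF, hmG⟩
    have := key hmF hmG
    rw [hsplitF, hsplitG, hhigh]
    exact ne_of_lt (by nlinarith)
  · rcases Finset.mem_sdiff.mp h with ⟨hmG, hmF⟩
    have := key hmG hmF
    rw [hsplitF, hsplitG, hhigh]
    exact ne_of_gt (by nlinarith)

theorem stmt_1 (w : ℕ → ℝ) (hw : ∀ t, w t ∈ Set.Ioo (0:ℝ) 1)
    (hsum : Summable w) :
    ∃ p : ℕ → ℕ, StrictMono p ∧ StrictAnti (w ∘ p) ∧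
      (∀ F G : Finset ℕ, F.Nonempty → G.Nonempty → F ≠ G →
        ∏ n ∈ F, (w ∘ p) n ≠ ∏ n ∈ G, (w ∘ p) n) ∧
      FPinf (w ∘ p) ⊆ FPinf w := by
  have hw' : ∀ t, 0 < w t ∧ w t < 1 := fun t => ⟨(hw t).1, (hw t).2⟩
  have h0 : Filter.Tendsto w Filter.atTop (nhds 0) := hsum.tendsto_atTop_zero
  have H : ∀ N : ℕ, ∀ ε : ℝ, ∃ n, N < n ∧ (0 < ε → w n < ε) := by
    intro N ε
    by_cases hε : 0 < ε
    · have h1 : ∀ᶠ n in Filter.atTop, w n < ε := h0.eventually (gt_mem_nhds hε)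
      have h2 : ∀ᶠ n in Filter.atTop, N < n := Filter.eventually_gt_atTop N
      obtain ⟨n, hn1, hn2⟩ := (h2.and h1).exists
      exact ⟨n, hn1, fun _ => hn2⟩
    · exact ⟨N + 1, Nat.lt_succ_self N, fun h => absurd h hε⟩
  set p : ℕ → ℕ := fun t => (prAux w H t).1 with hp
  -- the running product equals the product of chosen terms
  have hsnd : ∀ t, (prAux w H t).2 = ∏ i ∈ Finset.range (t + 1), w (p i) := by
    intro t
    induction t with
    | zero => simp [prAux, hp]
    | succ t ih =>
      rw [Finset.prod_range_succ, ← ih]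
      rfl
  have hsndpos : ∀ t, 0 < (prAux w H t).2 := by
    intro t
    rw [hsnd t]
    exact Finset.prod_pos (fun i _ => (hw' (p i)).1)
  -- step properties
  have hstep : ∀ t, p t < p (t + 1) ∧ w (p (t + 1)) < w (p t) ∧
      w (p (t + 1)) < (prAux w H t).2 := by
    intro t
    have hmin : 0 < min (w (p t)) (prAux w H t).2 :=
      lt_min (hw' (p t)).1 (hsndpos t)
    have hspec := (H (prAux w H t).1 (min (w (prAux w H t).1) (prAux w H t).2)).choose_spec
    have heq : p (t + 1) = (H (prAux w H t).1 (min (w (prAux w H t).1) (prAux w H t).2)).choose := rfl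
    rw [← heq] at hspec
    have h2 := hspec.2 hmin
    exact ⟨hspec.1, lt_of_lt_of_le h2 (min_le_left _ _),
      lt_of_lt_of_le h2 (min_le_right _ _)⟩
  have hmono : StrictMono p := strictMono_nat_of_lt_succ (fun t => (hstep t).1)
  have hanti : StrictAnti (w ∘ p) := strictAnti_nat_of_succ_lt (fun t => (hstep t).2.1)
  have hy : ∀ t, 0 < (w ∘ p) t ∧ (w ∘ p) t < 1 := fun t => hw' (p t)
  have hk : ∀ m, (w ∘ p) m < ∏ i ∈ Finset.range m, (w ∘ p) i := by
    intro m
    cases m with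
    | zero => simpa using (hw' (p 0)).2
    | succ t =>
      have := (hstep t).2.2
      rw [hsnd t] at this
      exact this
  refine ⟨p, hmono, hanti, fun F G _ _ hne => prods_ne hy hk F G hne, ?_⟩
  rintro s ⟨F, hFne, rfl⟩
  refine ⟨F.image p, hFne.image p, ?_⟩
  rw [Finset.prod_image (fun a _ b _ h => hmono.injective h)]
  rfl
end

section
/- Let S be a dense subsemigroup of ((0,∞),+) such that S ∩ (0,1) is a subsemigroup of ((0,1),·) and for each y ∈ S ∩ (0,1) and x ∈ S, both x/y ∈ S and y·x ∈ S. Then 0⁺(S) = { p ∈ βS_d : (0,ε) ∩ S ∈ p for all ε > 0 } is a two-sided ideal of (β(S ∩ (0,1)), ·), i.e., for p ∈ 0⁺(S) restricted to ultrafilters on S ∩ (0,1) and q any ultrafilter on S ∩ (0,1), both p·q and q·p contain (0,ε) ∩ S for every ε > 0. -/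
theorem stmt_3 (S : Set ℝ)
    (hpos : S ⊆ Set.Ioi (0:ℝ))
    (hdense : ∀ a b : ℝ, 0 < a → a < b → ∃ s ∈ S, a < s ∧ s < b)
    (hadd : ∀ x ∈ S, ∀ y ∈ S, x + y ∈ S)
    (hmul : ∀ x ∈ S ∩ Set.Ioo (0:ℝ) 1, ∀ y ∈ S ∩ Set.Ioo (0:ℝ) 1,
      x * y ∈ S ∩ Set.Ioo (0:ℝ) 1)
    (hdivmul : ∀ y ∈ S ∩ Set.Ioo (0:ℝ) 1, ∀ x ∈ S, x / y ∈ S ∧ y * x ∈ S)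
    (p q : Ultrafilter ℝ)
    (hpT : S ∩ Set.Ioo (0:ℝ) 1 ∈ p) (hqT : S ∩ Set.Ioo (0:ℝ) 1 ∈ q)
    (hp0 : ∀ ε : ℝ, 0 < ε → S ∩ Set.Ioo 0 ε ∈ p) :
    ∀ ε : ℝ, 0 < ε →
      -- (0, ε) ∩ S belongs to p·q :
      ({x | x ∈ S ∩ Set.Ioo (0:ℝ) 1 ∧
        {y | y ∈ S ∩ Set.Ioo (0:ℝ) 1 ∧ x * y ∈ S ∩ Set.Ioo 0 ε} ∈ q} ∈ p) ∧
      -- (0, ε) ∩ S belongs to q·p :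
      ({x | x ∈ S ∩ Set.Ioo (0:ℝ) 1 ∧
        {y | y ∈ S ∩ Set.Ioo (0:ℝ) 1 ∧ x * y ∈ S ∩ Set.Ioo 0 ε} ∈ p} ∈ q) := by
  intro ε hε
  have hε' : (0:ℝ) < min ε 1 := lt_min hε one_pos
  constructor
  · -- p·q
    have h1 : S ∩ Set.Ioo 0 (min ε 1) ∈ p := hp0 _ hε'
    refine Filter.mem_of_superset h1 ?_
    rintro x ⟨hxS, hx0, hx1⟩
    have hx1' : x < 1 := lt_of_lt_of_le hx1 (min_le_right _ _)
    have hxε : x < ε := lt_of_lt_of_le hx1 (min_le_left _ _)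
    refine ⟨⟨hxS, hx0, hx1'⟩, ?_⟩
    refine Filter.mem_of_superset hqT ?_
    rintro y ⟨hyS, hy0, hy1⟩
    refine ⟨⟨hyS, hy0, hy1⟩, ?_⟩
    have hxy := hmul x ⟨hxS, hx0, hx1'⟩ y ⟨hyS, hy0, hy1⟩
    refine ⟨hxy.1, hxy.2.1, ?_⟩
    calc x * y < x * 1 := by nlinarith
      _ = x := mul_one x
      _ < ε := hxε
  · -- q·p
    refine Filter.mem_of_superset hqT ?_
    rintro x ⟨hxS, hx0, hx1⟩
    refine ⟨⟨hxS, hx0, hx1⟩, ?_⟩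
    have h1 : S ∩ Set.Ioo 0 (min ε 1) ∈ p := hp0 _ hε'
    refine Filter.mem_of_superset h1 ?_
    rintro y ⟨hyS, hy0, hy1⟩
    have hy1' : y < 1 := lt_of_lt_of_le hy1 (min_le_right _ _)
    have hyε : y < ε := lt_of_lt_of_le hy1 (min_le_left _ _)
    refine ⟨⟨hyS, hy0, hy1'⟩, ?_⟩
    have hxy := hmul x ⟨hxS, hx0, hx1⟩ y ⟨hyS, hy0, hy1'⟩
    refine ⟨hxy.1, hxy.2.1, ?_⟩
    calc x * y < 1 * y := by nlinarith
      _ = y := one_mul y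
      _ < ε := hyε
end

section
/- Let S be a dense subsemigroup of ((0,∞),+) with S ∩ (0,1) a multiplicative subsemigroup, and suppose A ⊆ S ∩ (0,1) is such that both: (i) A is a member of an ultrafilter p on S ∩ (0,1), and (ii) for every B ∈ p and every ε > 0, B contains FS(⟨x_n⟩) ∩ (0,ε) for some sequence ⟨x_n⟩ with convergent sum, i.e., there exists a strictly decreasing sequence ⟨x_n⟩ with FS(⟨x_n⟩) ⊆ B ∩ (0,ε). Fix m ∈ ℕ and ε > 0, and let B_0 = { z ∈ A ∩ (0,ε) : ∃ strictly decreasing x_1 > ... > x_m with FS(⟨x_n⟩_{n=1}^m) ⊆ A ∩ (0,ε) and z = x_1 + ... + x_m }. Then B_0 ∈ p. -/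
def FSinf (x : ℕ → ℝ) : Set ℝ :=
  {s | ∃ F : Finset ℕ, F.Nonempty ∧ s = ∑ n ∈ F, x n}

def FSfin (m : ℕ) (x : ℕ → ℝ) : Set ℝ :=
  {s | ∃ F : Finset ℕ, F.Nonempty ∧ F ⊆ Finset.range m ∧ s = ∑ n ∈ F, x n}

theorem stmt_9 (S : Set ℝ)
    (hpos : S ⊆ Set.Ioi (0:ℝ))
    (hdense : ∀ a b : ℝ, 0 < a → a < b → ∃ s ∈ S, a < s ∧ s < b)
    (hadd : ∀ x ∈ S, ∀ y ∈ S, x + y ∈ S)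
    (hmul : ∀ x ∈ S ∩ Set.Ioo (0:ℝ) 1, ∀ y ∈ S ∩ Set.Ioo (0:ℝ) 1,
      x * y ∈ S ∩ Set.Ioo (0:ℝ) 1)
    (A : Set ℝ) (hAsub : A ⊆ S ∩ Set.Ioo (0:ℝ) 1)
    (p : Ultrafilter ℝ) (hAp : A ∈ p)
    (hp : ∀ B ∈ p, ∀ ε : ℝ, 0 < ε → ∃ x : ℕ → ℝ, StrictAnti x ∧ Summable x ∧
      FSinf x ⊆ B ∩ Set.Ioo 0 ε)
    (m : ℕ) (hm : 0 < m) (ε : ℝ) (hε : 0 < ε) :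
    {z | z ∈ A ∩ Set.Ioo 0 ε ∧ ∃ x : ℕ → ℝ,
      (∀ i j, i < j → j < m → x j < x i) ∧
      FSfin m x ⊆ A ∩ Set.Ioo 0 ε ∧
      z = ∑ n ∈ Finset.range m, x n} ∈ p := by
  by_contra hB0
  set B0 : Set ℝ := {z | z ∈ A ∩ Set.Ioo 0 ε ∧ ∃ x : ℕ → ℝ,
      (∀ i j, i < j → j < m → x j < x i) ∧
      FSfin m x ⊆ A ∩ Set.Ioo 0 ε ∧
      z = ∑ n ∈ Finset.range m, x n} with hB0def
  have hcompl : B0ᶜ ∈ p := Ultrafilter.compl_mem_iff_notMem.2 hB0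
  have hB : A ∩ B0ᶜ ∈ p := Filter.inter_mem hAp hcompl
  obtain ⟨x, hanti, hsum, hFS⟩ := hp _ hB ε hε
  set z := ∑ n ∈ Finset.range m, x n with hz
  have hzFS : z ∈ FSinf x := ⟨Finset.range m, Finset.nonempty_range_iff.2 hm.ne', rfl⟩
  have hzB := hFS hzFS
  have hzA : z ∈ A := hzB.1.1
  have hzI : z ∈ Set.Ioo (0:ℝ) ε := hzB.2
  apply hzB.1.2
  refine ⟨⟨hzA, hzI⟩, x, fun i j hij _ => hanti hij, ?_, rfl⟩
  intro s hs
  obtain ⟨F, hF, hFsub, rfl⟩ := hs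
  have : (∑ n ∈ F, x n) ∈ FSinf x := ⟨F, hF, rfl⟩
  exact ⟨(hFS this).1.1, (hFS this).2⟩
end

section
/- Let ⟨y_n⟩ be a strictly decreasing sequence in (0,1) such that for each n, y_{n+1} < min(E_n ∪ { u/v : u, v ∈ E_n, u < v }) where E_n = FP(⟨y_k⟩_{k=1}^n). Then ⟨y_n⟩ has distinct finite products: for nonempty finite F ≠ G ⊆ ℕ, ∏_{k∈F} y_k ≠ ∏_{k∈G} y_k. -/
/-- Finite products of the first `m` terms over nonempty index sets. -/
def FPfin (m : ℕ) (y : ℕ → ℝ) : Set ℝ :=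
  {s | ∃ F : Finset ℕ, F.Nonempty ∧ F ⊆ Finset.range m ∧ s = ∏ n ∈ F, y n}

theorem stmt_13 (y : ℕ → ℝ) (hy : ∀ n, y n ∈ Set.Ioo (0:ℝ) 1)
    (hanti : StrictAnti y)
    (hcond : ∀ n : ℕ,
      (∀ u ∈ FPfin (n + 1) y, y (n + 1) < u) ∧
      (∀ u ∈ FPfin (n + 1) y, ∀ v ∈ FPfin (n + 1) y, u < v → y (n + 1) < u / v)) :
    ∀ F G : Finset ℕ, F.Nonempty → G.Nonempty → F ≠ G →
      ∏ k ∈ F, y k ≠ ∏ k ∈ G, y k := by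
  have hpos : ∀ F : Finset ℕ, 0 < ∏ k ∈ F, y k := fun F =>
    Finset.prod_pos fun i _ => (hy i).1
  have hlt1 : ∀ F : Finset ℕ, F.Nonempty → ∏ k ∈ F, y k < 1 := by
    intro F ⟨a, ha⟩
    rw [← Finset.prod_erase_mul F y ha]
    calc (∏ k ∈ F.erase a, y k) * y a ≤ 1 * y a := by
          apply mul_le_mul_of_nonneg_right _ (hy a).1.le
          exact Finset.prod_le_one (fun i _ => (hy i).1.le) (fun i _ => (hy i).2.le)
      _ < 1 := by rw [one_mul]; exact (hy a).2
  have key : ∀ n : ℕ, ∀ F G : Finset ℕ, F ⊆ Finset.range n → G ⊆ Finset.range n →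
      F.Nonempty → G.Nonempty → F ≠ G → ∏ k ∈ F, y k ≠ ∏ k ∈ G, y k := by
    intro n
    induction n with
    | zero => intro F G hF _ ⟨a, ha⟩ _ _; simpa using hF ha
    | succ n ih =>
      have main : ∀ F G : Finset ℕ, F ⊆ Finset.range (n+1) → G ⊆ Finset.range (n+1) →
          G.Nonempty → n ∈ F → n ∉ G →
          ∏ k ∈ F, y k ≠ ∏ k ∈ G, y k := by
        intro F G hF hG hGne hnF hnG heq
        have hG' : G ⊆ Finset.range n := by
          intro x hx
          have hx1 := Finset.mem_range.mp (hG hx)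
          have : x ≠ n := fun h => hnG (h ▸ hx)
          exact Finset.mem_range.mpr (by omega)
        obtain ⟨a, ha⟩ := hGne
        have hn0 : n ≠ 0 := by have := Finset.mem_range.mp (hG' ha); omega
        obtain ⟨m, rfl⟩ := Nat.exists_eq_succ_of_ne_zero hn0
        have hqmem : (∏ k ∈ G, y k) ∈ FPfin (m+1) y := ⟨G, ⟨a, ha⟩, hG', rfl⟩
        rw [← Finset.prod_erase_mul F y hnF] at heq
        set P := ∏ k ∈ F.erase (m+1), y k with hP
        set q := ∏ k ∈ G, y k with hq
        rcases Finset.eq_empty_or_nonempty (F.erase (m+1)) with hE | hE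
        · rw [hE, Finset.prod_empty] at hP
          rw [hP, one_mul] at heq
          exact absurd heq (ne_of_lt ((hcond m).1 q hqmem))
        · have hPmem : P ∈ FPfin (m+1) y := by
            refine ⟨F.erase (m+1), hE, ?_, rfl⟩
            intro x hx
            have := Finset.mem_range.mp (hF (Finset.mem_of_mem_erase hx))
            have := Finset.ne_of_mem_erase hx
            exact Finset.mem_range.mpr (by omega)
          have hPpos : 0 < P := hpos _
          rcases lt_trichotomy q P with h | h | h
          · have := (hcond m).2 q hqmem P hPmem h
            rw [lt_div_iff₀ hPpos] at this
            nlinarith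
          · have : y (m+1) = 1 := by
              have := heq
              rw [← h] at this
              field_simp at this
              nlinarith
            exact absurd this (ne_of_lt (hy (m+1)).2)
          · nlinarith [(hy (m+1)).1, (hy (m+1)).2]
      intro F G hF hG hFne hGne hne
      by_cases hnF : n ∈ F <;> by_cases hnG : n ∈ G
      · -- both contain n
        intro heq
        rw [← Finset.prod_erase_mul F y hnF, ← Finset.prod_erase_mul G y hnG] at heq
        have heq' : ∏ k ∈ F.erase n, y k = ∏ k ∈ G.erase n, y k :=
          mul_right_cancel₀ (ne_of_gt (hy n).1) heq
        have hFsub : F.erase n ⊆ Finset.range n := by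
          intro x hx
          have := Finset.mem_range.mp (hF (Finset.mem_of_mem_erase hx))
          have := Finset.ne_of_mem_erase hx
          exact Finset.mem_range.mpr (by omega)
        have hGsub : G.erase n ⊆ Finset.range n := by
          intro x hx
          have := Finset.mem_range.mp (hG (Finset.mem_of_mem_erase hx))
          have := Finset.ne_of_mem_erase hx
          exact Finset.mem_range.mpr (by omega)
        rcases Finset.eq_empty_or_nonempty (F.erase n) with hFE | hFE <;>
          rcases Finset.eq_empty_or_nonempty (G.erase n) with hGE | hGE
        · have h1 : F = {n} := by
            rcases (Finset.erase_eq_empty_iff F n).mp hFE with h | h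
            · exact absurd (h ▸ hnF) (by simp)
            · exact h
          have h2 : G = {n} := by
            rcases (Finset.erase_eq_empty_iff G n).mp hGE with h | h
            · exact absurd (h ▸ hnG) (by simp)
            · exact h
          exact hne (h1.trans h2.symm)
        · rw [hFE] at heq'; simp at heq'
          exact absurd heq'.symm (ne_of_lt (hlt1 _ hGE))
        · rw [hGE] at heq'; simp at heq'
          exact absurd heq' (ne_of_lt (hlt1 _ hFE))
        · have hneq : F.erase n ≠ G.erase n := by
            intro h
            apply hne
            have : insert n (F.erase n) = insert n (G.erase n) := by rw [h]
            rwa [Finset.insert_erase hnF, Finset.insert_erase hnG] at this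
          exact ih (F.erase n) (G.erase n) hFsub hGsub hFE hGE hneq heq'
      · exact main F G hF hG hGne hnF hnG
      · exact fun heq => main G F hG hF hFne hnG hnF heq.symm
      · have hF' : F ⊆ Finset.range n := by
          intro x hx
          have := Finset.mem_range.mp (hF hx)
          have : x ≠ n := fun h => hnF (h ▸ hx)
          exact Finset.mem_range.mpr (by omega)
        have hG' : G ⊆ Finset.range n := by
          intro x hx
          have := Finset.mem_range.mp (hG hx)
          have : x ≠ n := fun h => hnG (h ▸ hx)
          exact Finset.mem_range.mpr (by omega)
        exact ih F G hF' hG' hFne hGne hne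
  intro F G hFne hGne hne
  refine key ((F ∪ G).sup Nat.succ) F G ?_ ?_ hFne hGne hne
  · intro x hx
    exact Finset.mem_range.mpr (Nat.lt_of_succ_le (Finset.le_sup (f := Nat.succ) (Finset.mem_union_left G hx)))
  · intro x hx
    exact Finset.mem_range.mpr (Nat.lt_of_succ_le (Finset.le_sup (f := Nat.succ) (Finset.mem_union_right F hx)))
end
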